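/- Let U, V ∈ SO(3) and D = diag(d₁,d₂,d₃) with d₁ ≥ d₂ ≥ |d₃| ≥ 0, d₁ ≠ d₂ and d₂ + d₃ = 0. Then for every Q ∈ SO(3), tr(Qᵀ (U D Vᵀ)) ≤ d₁ + d₂ + d₃, and equality holds if and only if Q = U exp(θ ê₁) Vᵀ for some θ ∈ ℝ, where e₁ = (1,0,0); that is, the set of maximizers of Q ↦ tr(Qᵀ U D Vᵀ) over SO(3) is the one-dimensional set {U exp(θ ê₁) Vᵀ : θ ∈ ℝ}. -/

import Mathlib

open MeasureTheory Matrix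

noncomputable section

/-- The space of real `3 × 3` matrices. -/
abbrev M3 := Matrix (Fin 3) (Fin 3) ℝ

instance : MeasurableSpace M3 := (inferInstance : MeasurableSpace (Fin 3 → Fin 3 → ℝ))

/-- The special orthogonal group `SO(3)`: real `3 × 3` matrices `R` with
`Rᵀ R = 1` and `det R = 1`. -/
def SO3 : Set M3 := {R | Rᵀ * R = 1 ∧ R.det = 1}

/-- The hat map: `hat x` is the skew-symmetric `3 × 3` matrix with `(hat x) y = x × y`. -/
def hat (x : Fin 3 → ℝ) : M3 :=
  !![0, -x 2, x 1; x 2, 0, -x 0; -x 1, x 0, 0]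

namespace WahbaAux

def Kmat : M3 := !![0,0,0;0,0,-1;0,1,0]
def Pmat : M3 := !![0,0,0;0,1,0;0,0,1]

def phi : ℂ →ₗ[ℝ] M3 where
  toFun z := z.re • Pmat + z.im • Kmat
  map_add' z w := by simp [add_smul]; abel
  map_smul' c z := by simp [Complex.smul_re, Complex.smul_im, smul_smul]

lemma phi_apply (z : ℂ) : phi z = z.re • Pmat + z.im • Kmat := rfl

lemma phi_mul (z w : ℂ) : phi (z * w) = phi z * phi w := by
  ext i j
  fin_cases i <;> fin_cases j <;>
    simp [phi_apply, Pmat, Kmat, Complex.mul_re, Complex.mul_im, Matrix.mul_apply,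
      Fin.sum_univ_three, Matrix.vecHead, Matrix.vecTail] <;> ring

lemma phi_one : phi 1 = Pmat := by simp [phi_apply]

lemma phi_pow (z : ℂ) (n : ℕ) (hn : n ≠ 0) : phi (z ^ n) = (phi z) ^ n := by
  induction n with
  | zero => omega
  | succ m ih =>
    rcases Nat.eq_zero_or_pos m with hm | hm
    · subst hm; simp
    · rw [pow_succ, pow_succ, phi_mul, ih (by omega)]

lemma exp_phi (w : ℂ) : NormedSpace.exp (phi w) = 1 - Pmat + phi (Complex.exp w) := by
  let L : ℂ →L[ℝ] M3 := phi.toContinuousLinearMap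
  have hsum : Summable fun n : ℕ => ((n.factorial : ℝ))⁻¹ • w ^ n :=
    NormedSpace.expSeries_summable' w
  have hg : Summable fun n : ℕ => phi (((n.factorial : ℝ))⁻¹ • w ^ n) := hsum.map L L.continuous
  have hh : Summable fun n : ℕ => (if n = 0 then (1 - Pmat : M3) else 0) :=
    (hasSum_ite_eq 0 (1 - Pmat : M3)).summable
  have key : ∀ n : ℕ, ((n.factorial : ℝ))⁻¹ • (phi w) ^ n
      = (if n = 0 then (1 - Pmat : M3) else 0) + phi (((n.factorial : ℝ))⁻¹ • w ^ n) := by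
    intro n
    rcases Nat.eq_zero_or_pos n with hn | hn
    · subst hn; simp [phi_one]
    · rw [if_neg (by omega), _root_.map_smul, phi_pow w n (by omega), zero_add]
  rw [NormedSpace.exp_eq_tsum (𝕂 := ℝ)]
  calc ∑' n : ℕ, ((n.factorial : ℝ))⁻¹ • (phi w) ^ n
      = ∑' n : ℕ, ((if n = 0 then (1 - Pmat : M3) else 0) + phi (((n.factorial : ℝ))⁻¹ • w ^ n)) :=
        tsum_congr key
    _ = (1 - Pmat) + phi (∑' n : ℕ, ((n.factorial : ℝ))⁻¹ • w ^ n) := by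
        rw [Summable.tsum_add hh hg, tsum_ite_eq]
        congr 1
        exact (L.map_tsum hsum).symm
    _ = 1 - Pmat + phi (Complex.exp w) := by
        have h : (∑' n : ℕ, ((n.factorial : ℝ))⁻¹ • w ^ n) = NormedSpace.exp w := by
          rw [NormedSpace.exp_eq_tsum (𝕂 := ℝ)]
        rw [h, ← Complex.exp_eq_exp_ℂ]

lemma hat_e1 : hat ![1,0,0] = Kmat := by
  ext i j; fin_cases i <;> fin_cases j <;> simp [hat, Kmat]

lemma exp_K (θ : ℝ) : NormedSpace.exp (θ • hat ![1,0,0]) =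
    !![1,0,0;0,Real.cos θ,-(Real.sin θ);0,Real.sin θ,Real.cos θ] := by
  have h1 : θ • hat ![1,0,0] = phi (θ * Complex.I) := by
    rw [hat_e1, phi_apply]
    simp
  rw [h1, exp_phi, Complex.exp_mul_I, phi_apply]
  have hre : (Complex.cos θ + Complex.sin θ * Complex.I).re = Real.cos θ := by
    simp [Complex.cos_ofReal_re, Complex.sin_ofReal_im]
  have him : (Complex.cos θ + Complex.sin θ * Complex.I).im = Real.sin θ := by
    simp [Complex.sin_ofReal_re, Complex.cos_ofReal_im]
  rw [hre, him]
  ext i j; fin_cases i <;> fin_cases j <;>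
    simp [Pmat, Kmat, Matrix.one_apply, Matrix.vecHead, Matrix.vecTail]

lemma core_ineq (a b c d e f g h i : ℝ)
    (c1 : a*a+d*d+g*g=1) (c2 : b*b+e*e+h*h=1) (c3 : c*c+f*f+i*i=1)
    (ca : a = e*i - f*h) (ce : e = a*i - c*g) (ci : i = a*e - b*d) :
    a + e - i ≤ 1 := by
  have hid : (1+i-a-e)*(3-i+a+e) = (f+h)^2+(c+g)^2+(b-d)^2 := by
    linear_combination (-1)*c1 + (-1)*c2 + (-1)*c3 + (-2)*ca + (-2)*ce + 2*ci
  by_contra hs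
  push_neg at hs
  nlinarith [hid, sq_nonneg (f+h), sq_nonneg (c+g), sq_nonneg (b-d),
    mul_pos (by linarith : (0:ℝ) < (a+e-i)-1) (by linarith : (0:ℝ) < 3+(a+e-i))]

end WahbaAux

namespace WahbaAux

lemma core_le (d0 d1 a b c dd e f g h i : ℝ)
    (hd1nn : 0 ≤ d1) (hd01 : d1 < d0)
    (c1 : a*a+dd*dd+g*g=1) (c2 : b*b+e*e+h*h=1) (c3 : c*c+f*f+i*i=1)
    (ca : a = e*i - f*h) (ce : e = a*i - c*g) (ci : i = a*e - b*dd) :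
    d0*a + d1*e + (-d1)*i ≤ d0 + d1 + (-d1) := by
  have hkey := core_ineq a b c dd e f g h i c1 c2 c3 ca ce ci
  have ha1 : a ≤ 1 := by
    nlinarith [sq_nonneg (1-a), mul_self_nonneg dd, mul_self_nonneg g]
  have hint1 : 0 ≤ (d0-d1)*(1-a) :=
    mul_nonneg (by linarith) (by linarith)
  have hint2 : 0 ≤ d1*(1-a-e+i) := mul_nonneg hd1nn (by linarith)
  nlinarith [hint1, hint2]

lemma core_eq (d0 d1 a b c dd e f g h i : ℝ)
    (hd1nn : 0 ≤ d1) (hd01 : d1 < d0)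
    (c1 : a*a+dd*dd+g*g=1) (c2 : b*b+e*e+h*h=1) (c3 : c*c+f*f+i*i=1)
    (r1 : a*a+b*b+c*c=1)
    (ca : a = e*i - f*h) (ce : e = a*i - c*g) (ci : i = a*e - b*dd)
    (heq : d0*a + d1*e + (-d1)*i = d0 + d1 + (-d1)) :
    a = 1 ∧ b = 0 ∧ c = 0 ∧ dd = 0 ∧ g = 0 ∧ i = e ∧ h = -f ∧ e^2+h^2 = 1 := by
  have hkey := core_ineq a b c dd e f g h i c1 c2 c3 ca ce ci
  have ha1 : a ≤ 1 := by
    nlinarith [sq_nonneg (1-a), mul_self_nonneg dd, mul_self_nonneg g]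
  have haeq : a = 1 := by
    by_contra hne'
    have hlt : a < 1 := lt_of_le_of_ne ha1 hne'
    have hint1 : 0 < (d0-d1)*(1-a) :=
      mul_pos (by linarith) (by linarith)
    have hint2 : 0 ≤ d1*(1-a-e+i) := mul_nonneg hd1nn (by linarith)
    nlinarith [hint1, hint2]
  subst haeq
  have hdd : dd = 0 := by
    have h0 : dd*dd = 0 := by
      have := mul_self_nonneg dd
      have := mul_self_nonneg g
      linarith
    exact mul_self_eq_zero.mp h0
  have hg : g = 0 := by
    have h0 : g*g = 0 := by
      have := mul_self_nonneg dd
      have := mul_self_nonneg g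
      linarith
    exact mul_self_eq_zero.mp h0
  have hb : b = 0 := by
    have h0 : b*b = 0 := by
      have := mul_self_nonneg b
      have := mul_self_nonneg c
      linarith
    exact mul_self_eq_zero.mp h0
  have hc : c = 0 := by
    have h0 : c*c = 0 := by
      have := mul_self_nonneg b
      have := mul_self_nonneg c
      linarith
    exact mul_self_eq_zero.mp h0
  subst hdd; subst hg; subst hb; subst hc
  have hsq : (e-i)^2 + (f+h)^2 = 0 := by linear_combination c2 + c3 + 2*ca
  have hei0 : (e-i)^2 = 0 := by
    have := sq_nonneg (e-i)
    have := sq_nonneg (f+h)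
    linarith
  have hfh0 : (f+h)^2 = 0 := by
    have := sq_nonneg (e-i)
    have := sq_nonneg (f+h)
    linarith
  have hei : e - i = 0 := by
    have := sq_eq_zero_iff.mp hei0
    exact this
  have hfh : f + h = 0 := by
    have := sq_eq_zero_iff.mp hfh0
    exact this
  refine ⟨rfl, rfl, rfl, rfl, rfl, by linarith, by linarith, by linear_combination c2⟩

end WahbaAux

open WahbaAux in
set_option maxHeartbeats 1000000 in
/-- **One-dimensional maximizer set of Wahba's problem.** If `d₁ ≥ d₂ ≥ |d₃| ≥ 0`,
`d₁ ≠ d₂` and `d₂ + d₃ = 0`, then for every `Q ∈ SO(3)`,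
`tr(Qᵀ U D Vᵀ) ≤ d₁ + d₂ + d₃`, with equality iff `Q = U exp(θ ê₁) Vᵀ` for some
`θ ∈ ℝ`. -/
theorem mmse_one_dim (U V : M3) (hU : U ∈ SO3) (hV : V ∈ SO3) (d : Fin 3 → ℝ)
    (h1 : d 1 ≤ d 0) (h2 : |d 2| ≤ d 1) (hne : d 0 ≠ d 1) (h23 : d 1 + d 2 = 0)
    (Q : M3) (hQ : Q ∈ SO3) :
    (Qᵀ * (U * Matrix.diagonal d * Vᵀ)).trace ≤ d 0 + d 1 + d 2 ∧
      ((Qᵀ * (U * Matrix.diagonal d * Vᵀ)).trace = d 0 + d 1 + d 2 ↔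
        ∃ θ : ℝ, Q = U * NormedSpace.exp (θ • hat ![1, 0, 0]) * Vᵀ) := by
  obtain ⟨hUo, hUdet⟩ := hU
  obtain ⟨hVo, hVdet⟩ := hV
  obtain ⟨hQo, hQdet⟩ := hQ
  have hUo' : U * Uᵀ = 1 := mul_eq_one_comm.mp hUo
  have hVo' : V * Vᵀ = 1 := mul_eq_one_comm.mp hVo
  have hd2 : d 2 = -(d 1) := by linarith
  have hd1nn : (0:ℝ) ≤ d 1 := le_trans (abs_nonneg _) h2
  have hd01 : d 1 < d 0 := lt_of_le_of_ne h1 (fun h => hne h.symm)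
  obtain ⟨R, hRdef⟩ : ∃ R : M3, R = Uᵀ * Q * V := ⟨_, rfl⟩
  have hQR : Q = U * R * Vᵀ := by
    rw [hRdef]
    simp only [← Matrix.mul_assoc]
    rw [hUo', Matrix.one_mul, Matrix.mul_assoc, hVo', Matrix.mul_one]
  have hRo : Rᵀ * R = 1 := by
    rw [hRdef]
    simp only [Matrix.transpose_mul, Matrix.transpose_transpose, Matrix.mul_assoc]
    rw [← Matrix.mul_assoc U Uᵀ, hUo', Matrix.one_mul, ← Matrix.mul_assoc Qᵀ Q, hQo,
      Matrix.one_mul, hVo]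
  have hRo' : R * Rᵀ = 1 := mul_eq_one_comm.mp hRo
  have hRdet : R.det = 1 := by
    rw [hRdef, Matrix.det_mul, Matrix.det_mul, Matrix.det_transpose, hUdet, hQdet, hVdet]
    norm_num
  -- trace reduction
  have htr : (Qᵀ * (U * Matrix.diagonal d * Vᵀ)).trace
      = d 0 * R 0 0 + d 1 * R 1 1 + d 2 * R 2 2 := by
    have hmat : Qᵀ * (U * Matrix.diagonal d * Vᵀ) = V * (Rᵀ * Matrix.diagonal d) * Vᵀ := by
      rw [hQR]
      simp only [Matrix.transpose_mul, Matrix.transpose_transpose, Matrix.mul_assoc]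
      rw [← Matrix.mul_assoc Uᵀ U, hUo, Matrix.one_mul]
    rw [hmat, Matrix.trace_mul_cycle, ← Matrix.mul_assoc, hVo, Matrix.one_mul]
    rw [Matrix.trace_fin_three]
    simp [Matrix.mul_apply, Fin.sum_univ_three, Matrix.diagonal]
    ring
  -- scalar orthonormality facts
  have c1 : R 0 0 * R 0 0 + R 1 0 * R 1 0 + R 2 0 * R 2 0 = 1 := by
    have := congr_fun (congr_fun hRo 0) 0
    simpa [Matrix.mul_apply, Fin.sum_univ_three, Matrix.one_apply] using this
  have c2 : R 0 1 * R 0 1 + R 1 1 * R 1 1 + R 2 1 * R 2 1 = 1 := by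
    have := congr_fun (congr_fun hRo 1) 1
    simpa [Matrix.mul_apply, Fin.sum_univ_three, Matrix.one_apply] using this
  have c3 : R 0 2 * R 0 2 + R 1 2 * R 1 2 + R 2 2 * R 2 2 = 1 := by
    have := congr_fun (congr_fun hRo 2) 2
    simpa [Matrix.mul_apply, Fin.sum_univ_three, Matrix.one_apply] using this
  have r1 : R 0 0 * R 0 0 + R 0 1 * R 0 1 + R 0 2 * R 0 2 = 1 := by
    have := congr_fun (congr_fun hRo' 0) 0
    simpa [Matrix.mul_apply, Fin.sum_univ_three, Matrix.one_apply] using this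
  -- adjugate = transpose, cofactor identities
  have hadj : R.adjugate = Rᵀ := by
    have hadjR : R.adjugate * R = 1 := by rw [Matrix.adjugate_mul, hRdet, one_smul]
    have h2' := congrArg (fun M => M * Rᵀ) hadjR
    simpa [Matrix.mul_assoc, hRo'] using h2'
  have hcof := (Matrix.adjugate_fin_three R).symm.trans hadj
  have hca : R 0 0 = R 1 1 * R 2 2 - R 1 2 * R 2 1 := by
    have := congr_fun (congr_fun hcof 0) 0
    simpa using this.symm
  have hce : R 1 1 = R 0 0 * R 2 2 - R 0 2 * R 2 0 := by
    have := congr_fun (congr_fun hcof 1) 1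
    simpa using this.symm
  have hci : R 2 2 = R 0 0 * R 1 1 - R 0 1 * R 1 0 := by
    have := congr_fun (congr_fun hcof 2) 2
    simpa using this.symm
  constructor
  · rw [htr, hd2]
    have := core_le (d 0) (d 1) (R 0 0) (R 0 1) (R 0 2) (R 1 0) (R 1 1) (R 1 2) (R 2 0)
      (R 2 1) (R 2 2) hd1nn hd01 c1 c2 c3 hca hce hci
    linarith
  constructor
  · -- equality → ∃ θ
    intro heq
    rw [htr, hd2] at heq
    obtain ⟨haeq, hb0, hc0, hd10, hd20, hei, hfh, heh⟩ :=
      core_eq (d 0) (d 1) (R 0 0) (R 0 1) (R 0 2) (R 1 0) (R 1 1) (R 1 2) (R 2 0)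
        (R 2 1) (R 2 2) hd1nn hd01 c1 c2 c3 r1 hca hce hci (by linarith)
    set z : ℂ := (R 1 1 : ℂ) + (R 2 1 : ℂ) * Complex.I with hz
    have hzre : z.re = R 1 1 := by simp [hz]
    have hzim : z.im = R 2 1 := by simp [hz]
    have habs : ‖z‖ = 1 := by
      rw [hz, Complex.norm_def, Complex.normSq_add_mul_I, heh, Real.sqrt_one]
    have hz0 : z ≠ 0 := by
      intro h0; rw [h0] at habs; simp at habs
    have hcos : Real.cos z.arg = R 1 1 := by
      rw [Complex.cos_arg hz0, habs, hzre, div_one]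
    have hsin : Real.sin z.arg = R 2 1 := by
      rw [Complex.sin_arg, habs, hzim, div_one]
    refine ⟨z.arg, ?_⟩
    rw [exp_K, hcos, hsin, hQR]
    congr 1
    congr 1
    ext i j
    fin_cases i <;> fin_cases j <;>
      simp [haeq, hb0, hc0, hd10, hd20, Matrix.vecHead, Matrix.vecTail] <;>
      linarith [hei, hfh]
  · -- ∃ θ → equality
    rintro ⟨θ, hθ⟩
    rw [exp_K] at hθ
    have hR : R = !![1,0,0;0,Real.cos θ,-(Real.sin θ);0,Real.sin θ,Real.cos θ] := by
      rw [hRdef, hθ]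
      simp only [← Matrix.mul_assoc]
      rw [hUo, Matrix.one_mul, Matrix.mul_assoc, hVo, Matrix.mul_one]
    rw [htr, hR]
    norm_num [Matrix.vecHead, Matrix.vecTail, Matrix.of_apply, Matrix.cons_val_two, Matrix.cons_val_one, Matrix.cons_val_zero]
    linear_combination (Real.cos θ - 1) * h23
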